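/- Let N ≥ 2, ρ_L, ρ_R ∈ (0,1) and ω_L, ω_R > 0 be arbitrary. Then for every n ≥ 1 and every 1 ≤ x_1 < … < x_n ≤ N−1, the n-point non-centered correlations of the explicit measure μ satisfy E_μ[∏_{i=1}^n η(x_i)] = Σ_{j=0}^n ρ_L^{n−j}(ρ_R−ρ_L)^j Σ_{1 ≤ i_1 < … < i_j ≤ n} ∏_{ℓ=1}^j (1/ω_L + x_{i_ℓ} − ℓ)/(1/ω_L + 1/ω_R + N − 1 − ℓ), where E_μ[g] := Σ_{η ∈ {0,1}^{{1,…,N−1}}} μ(η) g(η). -/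

import Mathlib

noncomputable def sepQ (N : ℕ) (ωL ωR : ℝ) (J : Finset ℕ) : ℝ :=
  (((J.sort (· ≤ ·)).zipIdx.map Prod.swap).map
    (fun p => (1 / ωL + (p.2 : ℝ) - ((p.1 : ℝ) + 1)) /
      (1 / ωL + 1 / ωR + (N : ℝ) - 1 - ((p.1 : ℝ) + 1)))).prod

noncomputable def sepF (N : ℕ) (ωL ωR : ℝ) (I : Finset ℕ) : ℝ :=
  ∑ J ∈ (Finset.Icc 1 (N - 1)).powerset.filter (fun J => I ⊆ J),
    (-1 : ℝ) ^ (J \ I).card * sepQ N ωL ωR J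

noncomputable def sepB (N : ℕ) (ρL ρR : ℝ) (I A : Finset ℕ) : ℝ :=
  (∏ x ∈ I, (if x ∈ A then ρR else 1 - ρR)) *
    (∏ x ∈ Finset.Icc 1 (N - 1) \ I, (if x ∈ A then ρL else 1 - ρL))

noncomputable def sepMu (N : ℕ) (ωL ωR ρL ρR : ℝ) (A : Finset ℕ) : ℝ :=
  ∑ I ∈ (Finset.Icc 1 (N - 1)).powerset, sepF N ωL ωR I * sepB N ρL ρR I A

noncomputable def occ (A : Finset ℕ) (x : ℕ) : ℝ := if x ∈ A then 1 else 0

noncomputable def sepGen (N : ℕ) (ωL ωR ρL ρR : ℝ) (f : Finset ℕ → ℝ) (A : Finset ℕ) : ℝ :=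
  (∑ x ∈ Finset.Icc 1 (N - 2),
      (occ A x * (1 - occ A (x + 1)) * (f (insert (x + 1) (A.erase x)) - f A) +
        occ A (x + 1) * (1 - occ A x) * (f (insert x (A.erase (x + 1))) - f A))) +
    ωL * (occ A 1 * (1 - ρL) * (f (A.erase 1) - f A) +
        ρL * (1 - occ A 1) * (f (insert 1 A) - f A)) +
    ωR * (occ A (N - 1) * (1 - ρR) * (f (A.erase (N - 1)) - f A) +
        ρR * (1 - occ A (N - 1)) * (f (insert (N - 1) A) - f A))

/-- Product over the increasingly sorted elements i_1 < … < i_j of s of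
(1/ω_L + x_{i_ℓ} − ℓ) / (1/ω_L + 1/ω_R + N − 1 − ℓ). -/
noncomputable def idxProdW (N n : ℕ) (ωL ωR : ℝ) (x : Fin n → ℕ) (s : Finset (Fin n)) : ℝ :=
  (((s.sort (· ≤ ·)).zipIdx.map Prod.swap).map
    (fun p => (1 / ωL + (x p.2 : ℝ) - ((p.1 : ℝ) + 1)) /
      (1 / ωL + 1 / ωR + (N : ℝ) - 1 - ((p.1 : ℝ) + 1)))).prod

section Aux

lemma sep_sort_image_strictMono {n : ℕ} (x : Fin n → ℕ) (hx : StrictMono x)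
    (s : Finset (Fin n)) :
    ((s.image x).sort (· ≤ ·)) = (s.sort (· ≤ ·)).map x := by
  refine (fun hp h1 h2 => List.Perm.eq_of_pairwise (fun a b _ _ h h' => le_antisymm h h') h1 h2 hp) ?_ ?_ ?_
  · rw [← Multiset.coe_eq_coe]
    show (((s.image x).sort (· ≤ ·) : List ℕ) : Multiset ℕ)
        = ((((s.sort (· ≤ ·)).map x : List ℕ)) : Multiset ℕ)
    rw [Finset.sort_eq, Finset.image_val_of_injOn (hx.injective.injOn),
      ← Multiset.map_coe, Finset.sort_eq]
  · exact Finset.pairwise_sort _ _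
  · exact List.Pairwise.map x (fun a b h => hx.monotone h) (Finset.pairwise_sort _ _)

lemma sepQ_image {N n : ℕ} (ωL ωR : ℝ) (x : Fin n → ℕ) (hx : StrictMono x)
    (s : Finset (Fin n)) : sepQ N ωL ωR (s.image x) = idxProdW N n ωL ωR x s := by
  unfold sepQ idxProdW
  rw [sep_sort_image_strictMono x hx, List.zipIdx_map]
  simp only [List.map_map]
  rfl

lemma sep_prod_measure (N : ℕ) (ρL ρR : ℝ) (I T : Finset ℕ)
    (hI : I ⊆ Finset.Icc 1 (N-1)) (hT : T ⊆ Finset.Icc 1 (N-1)) :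
    ∑ A ∈ (Finset.Icc 1 (N - 1)).powerset, sepB N ρL ρR I A * ∏ y ∈ T, occ A y
      = ∏ y ∈ T, (if y ∈ I then ρR else ρL) := by
  set S := Finset.Icc 1 (N-1) with hS
  set r : ℕ → ℝ := fun y => if y ∈ I then ρR else ρL with hr
  set b : ℕ → ℝ := fun y => if y ∈ T then 0 else 1 - r y with hb
  have key : ∀ A ∈ S.powerset, sepB N ρL ρR I A * ∏ y ∈ T, occ A y
      = ∏ y ∈ S, (if y ∈ A then r y else 1 - r y) * (if y ∈ T then occ A y else 1) := by
    intro A _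
    rw [Finset.prod_mul_distrib]
    congr 1
    · rw [← Finset.prod_sdiff hI, mul_comm]
      unfold sepB
      congr 1
      · exact Finset.prod_congr rfl fun y hy => by simp [hr, hy]
      · exact Finset.prod_congr rfl fun y hy => by
          simp [hr, (Finset.mem_sdiff.mp hy).2]
    · rw [← Finset.prod_sdiff hT]
      have h1 : ∏ y ∈ S \ T, (if y ∈ T then occ A y else 1) = 1 :=
        (Finset.prod_congr rfl fun y hy =>
          if_neg (Finset.mem_sdiff.mp hy).2).trans Finset.prod_const_one
      rw [h1, one_mul]
      exact Finset.prod_congr rfl fun y hy => (if_pos hy).symm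
  rw [Finset.sum_congr rfl key]
  have key2 : ∀ A ∈ S.powerset,
      (∏ y ∈ S, (if y ∈ A then r y else 1 - r y) * (if y ∈ T then occ A y else 1))
      = (∏ y ∈ A, r y) * ∏ y ∈ S \ A, b y := by
    intro A hA
    rw [Finset.mem_powerset] at hA
    rw [← Finset.prod_sdiff hA, mul_comm ((∏ y ∈ A, r y))]
    congr 1
    · refine Finset.prod_congr rfl fun y hy => ?_
      have hyA := (Finset.mem_sdiff.mp hy).2
      by_cases h : y ∈ T <;> simp [h, hyA, hb, occ]
    · refine Finset.prod_congr rfl fun y hy => ?_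
      by_cases h : y ∈ T <;> simp [h, hy, occ]
  rw [Finset.sum_congr rfl key2, ← Finset.prod_add]
  have h3 : ∀ y ∈ S, r y + b y = if y ∈ T then r y else 1 := by
    intro y _
    by_cases h : y ∈ T
    · simp [hb, h]
    · simp [hb, h]
  rw [Finset.prod_congr rfl h3, ← Finset.prod_sdiff hT]
  rw [Finset.prod_congr rfl (fun y hy => if_neg (Finset.mem_sdiff.mp hy).2),
    Finset.prod_const_one, one_mul]
  exact Finset.prod_congr rfl fun y hy => if_pos hy

lemma sep_alt_sum (S K J : Finset ℕ) (hJ : J ⊆ S) :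
    ∑ I ∈ S.powerset, (if K ⊆ I ∧ I ⊆ J then (-1 : ℝ) ^ (J \ I).card else 0)
      = if J = K then 1 else 0 := by
  rw [← Finset.sum_subset (Finset.powerset_mono.mpr hJ)
    (fun I _ hIJ => if_neg (fun h => hIJ (Finset.mem_powerset.mpr h.2)))]
  have step : ∀ I ∈ J.powerset, (if K ⊆ I ∧ I ⊆ J then (-1 : ℝ) ^ (J \ I).card else 0)
      = (if K ⊆ I then (-1 : ℝ) ^ (J \ I).card else 0) := by
    intro I hI
    rw [Finset.mem_powerset] at hI
    by_cases h : K ⊆ I <;> simp [h, hI]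
  rw [Finset.sum_congr rfl step]
  have reindex : (∑ I ∈ J.powerset, if K ⊆ I then (-1:ℝ) ^ (J \ I).card else 0)
      = ∑ t ∈ J.powerset, (if K ⊆ J \ t then (-1:ℝ) ^ t.card else 0) := by
    refine Finset.sum_nbij' (fun I => J \ I) (fun t => J \ t)
      (fun I hI => Finset.mem_powerset.mpr Finset.sdiff_subset)
      (fun t ht => Finset.mem_powerset.mpr Finset.sdiff_subset)
      (fun I hI => Finset.sdiff_sdiff_eq_self (Finset.mem_powerset.mp hI))
      (fun t ht => Finset.sdiff_sdiff_eq_self (Finset.mem_powerset.mp ht))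
      (fun I hI => ?_)
    rw [Finset.sdiff_sdiff_eq_self (Finset.mem_powerset.mp hI)]
  rw [reindex]
  by_cases hKJ : K ⊆ J
  · have hcond : ∀ t, t ∈ J.powerset → ((K ⊆ J \ t) ↔ t ∈ (J \ K).powerset) := by
      intro t ht
      rw [Finset.mem_powerset] at ht ⊢
      constructor
      · intro h a hat
        rw [Finset.mem_sdiff]
        refine ⟨ht hat, fun haK => ?_⟩
        exact (Finset.mem_sdiff.mp (h haK)).2 hat
      · intro h a haK
        rw [Finset.mem_sdiff]
        exact ⟨hKJ haK, fun hat => (Finset.mem_sdiff.mp (h hat)).2 haK⟩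
    have : (∑ t ∈ J.powerset, if K ⊆ J \ t then (-1 : ℝ) ^ t.card else 0)
        = ∑ t ∈ (J \ K).powerset, (-1 : ℝ) ^ t.card := by
      rw [← Finset.sum_subset (Finset.powerset_mono.mpr (Finset.sdiff_subset))
        (fun t ht htk => if_neg (by rw [hcond t ht]; exact htk))]
      refine Finset.sum_congr rfl fun t ht => ?_
      have ht' : t ∈ J.powerset := Finset.powerset_mono.mpr Finset.sdiff_subset ht
      rw [if_pos ((hcond t ht').mpr ht)]
    have cast : ∑ t ∈ (J \ K).powerset, (-1 : ℝ) ^ t.card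
        = ((∑ t ∈ (J \ K).powerset, (-1 : ℤ) ^ t.card : ℤ) : ℝ) := by
      push_cast; rfl
    rw [this, cast, Finset.sum_powerset_neg_one_pow_card]
    rw [show (((if (J \ K) = ∅ then 1 else 0 : ℤ)) : ℝ) = if (J \ K) = ∅ then 1 else 0 by
      split <;> simp]
    congr 1
    rw [Finset.sdiff_eq_empty_iff_subset]
    exact propext ⟨fun h => le_antisymm h hKJ, fun h => le_of_eq h⟩
  · have : ∀ t ∈ J.powerset, (if K ⊆ J \ t then (-1 : ℝ) ^ t.card else 0) = 0 := by
      intro t ht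
      exact if_neg fun h => hKJ (h.trans Finset.sdiff_subset)
    rw [Finset.sum_congr rfl this, Finset.sum_const_zero]
    rw [if_neg (fun h => hKJ (le_of_eq h.symm))]

lemma sep_IE (N : ℕ) (ωL ωR : ℝ) (K : Finset ℕ) (hK : K ⊆ Finset.Icc 1 (N-1)) :
    ∑ I ∈ (Finset.Icc 1 (N - 1)).powerset, (if K ⊆ I then sepF N ωL ωR I else 0)
      = sepQ N ωL ωR K := by
  set S := Finset.Icc 1 (N-1) with hS
  have expand : ∀ I ∈ S.powerset, (if K ⊆ I then sepF N ωL ωR I else 0)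
      = ∑ J ∈ S.powerset, (if K ⊆ I ∧ I ⊆ J then (-1:ℝ)^(J \ I).card * sepQ N ωL ωR J else 0) := by
    intro I hI
    by_cases h : K ⊆ I
    · rw [if_pos h]
      unfold sepF
      rw [Finset.sum_filter]
      refine Finset.sum_congr rfl fun J hJ => ?_
      by_cases h2 : I ⊆ J <;> simp [h, h2]
    · rw [if_neg h]
      rw [Finset.sum_congr rfl (fun J _ => if_neg (fun hc => h hc.1)), Finset.sum_const_zero]
  rw [Finset.sum_congr rfl expand, Finset.sum_comm]
  have inner : ∀ J ∈ S.powerset,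
      ∑ I ∈ S.powerset, (if K ⊆ I ∧ I ⊆ J then (-1:ℝ)^(J \ I).card * sepQ N ωL ωR J else 0)
      = (if J = K then 1 else 0) * sepQ N ωL ωR J := by
    intro J hJ
    rw [← sep_alt_sum S K J (Finset.mem_powerset.mp hJ), Finset.sum_mul]
    refine Finset.sum_congr rfl fun I _ => ?_
    by_cases h : K ⊆ I ∧ I ⊆ J <;> simp [h]
  rw [Finset.sum_congr rfl inner]
  rw [Finset.sum_congr rfl (fun J _ => ite_zero_mul _ _ _ )]
  rw [Finset.sum_ite_eq' S.powerset K (fun J => 1 * sepQ N ωL ωR J),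
    if_pos (Finset.mem_powerset.mpr hK), one_mul]

end Aux

/-- for arbitrary ω_L, ω_R > 0, the n-point non-centered correlations of μ. -/
theorem sep_n_point_noncentered_general
    (N n : ℕ) (hN : 2 ≤ N) (hn : 1 ≤ n) (ρL ρR ωL ωR : ℝ)
    (hρL : 0 < ρL ∧ ρL < 1) (hρR : 0 < ρR ∧ ρR < 1)
    (hωL : 0 < ωL) (hωR : 0 < ωR)
    (x : Fin n → ℕ) (hmono : StrictMono x)
    (hx1 : ∀ i, 1 ≤ x i) (hx2 : ∀ i, x i ≤ N - 1) :
    ∑ A ∈ (Finset.Icc 1 (N - 1)).powerset,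
        sepMu N ωL ωR ρL ρR A * ∏ i, occ A (x i)
      = ∑ j ∈ Finset.range (n + 1), ρL ^ (n - j) * (ρR - ρL) ^ j *
          ∑ s ∈ Finset.powersetCard j (Finset.univ : Finset (Fin n)),
            idxProdW N n ωL ωR x s := by
  classical
  set S := Finset.Icc 1 (N-1) with hS
  have hxS : ∀ i, x i ∈ S := fun i => Finset.mem_Icc.mpr ⟨hx1 i, hx2 i⟩
  -- Step 1: swap sums
  have step1 : ∑ A ∈ S.powerset, sepMu N ωL ωR ρL ρR A * ∏ i, occ A (x i)
      = ∑ I ∈ S.powerset, sepF N ωL ωR I *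
          ∑ A ∈ S.powerset, sepB N ρL ρR I A * ∏ i, occ A (x i) := by
    unfold sepMu
    simp_rw [Finset.sum_mul, mul_assoc]
    rw [Finset.sum_comm]
    simp_rw [← Finset.mul_sum]
    rfl
  rw [step1]
  -- Step 2: product measure
  have hT : (Finset.univ.image x) ⊆ S := by
    intro y hy
    obtain ⟨i, _, rfl⟩ := Finset.mem_image.mp hy
    exact hxS i
  have hinj : ∀ i ∈ (Finset.univ : Finset (Fin n)), ∀ j ∈ Finset.univ, x i = x j → i = j :=
    fun i _ j _ h => hmono.injective h
  have step2 : ∀ I ∈ S.powerset,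
      ∑ A ∈ S.powerset, sepB N ρL ρR I A * ∏ i, occ A (x i)
      = ∏ i, (if x i ∈ I then ρR else ρL) := by
    intro I hI
    have h0 : ∀ A, (∏ i, occ A (x i)) = ∏ y ∈ Finset.univ.image x, occ A y := by
      intro A
      rw [Finset.prod_image hinj]
    rw [Finset.sum_congr rfl (fun A _ => by rw [h0 A])]
    rw [sep_prod_measure N ρL ρR I _ (Finset.mem_powerset.mp hI) hT]
    rw [Finset.prod_image hinj]
  rw [Finset.sum_congr rfl (fun I hI => by rw [step2 I hI])]
  -- Step 3: binomial expansion of the product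
  have step3 : ∀ I : Finset ℕ, (∏ i, (if x i ∈ I then ρR else ρL))
      = ∑ t ∈ (Finset.univ : Finset (Fin n)).powerset,
          (if t.image x ⊆ I then (ρR - ρL) ^ t.card else 0) * ρL ^ (n - t.card) := by
    intro I
    have h1 : ∀ i : Fin n, (if x i ∈ I then ρR else ρL)
        = (if x i ∈ I then ρR - ρL else 0) + ρL := by
      intro i; by_cases h : x i ∈ I <;> simp [h]
    rw [Finset.prod_congr rfl (fun i _ => h1 i), Finset.prod_add]
    refine Finset.sum_congr rfl fun t ht => ?_
    congr 1
    · by_cases h : t.image x ⊆ I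
      · rw [if_pos h,
          Finset.prod_congr rfl (fun i hi => if_pos (h (Finset.mem_image_of_mem x hi))),
          Finset.prod_const]
      · rw [if_neg h]
        rw [Finset.image_subset_iff] at h
        push_neg at h
        obtain ⟨i, hi, hxi⟩ := h
        exact Finset.prod_eq_zero hi (if_neg hxi)
    · rw [Finset.prod_const, Finset.card_sdiff_of_subset (Finset.subset_univ t),
        Finset.card_univ, Fintype.card_fin]
  rw [Finset.sum_congr rfl (fun I _ => by rw [step3 I])]
  -- Step 4: swap sums and apply inclusion-exclusion
  simp_rw [Finset.mul_sum]
  rw [Finset.sum_comm]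
  have step4 : ∀ t ∈ (Finset.univ : Finset (Fin n)).powerset,
      ∑ I ∈ S.powerset, sepF N ωL ωR I *
        ((if t.image x ⊆ I then (ρR - ρL) ^ t.card else 0) * ρL ^ (n - t.card))
      = ρL ^ (n - t.card) * (ρR - ρL) ^ t.card * idxProdW N n ωL ωR x t := by
    intro t _
    have hK : t.image x ⊆ S := by
      intro y hy
      obtain ⟨i, _, rfl⟩ := Finset.mem_image.mp hy
      exact hxS i
    have h5 : ∀ I ∈ S.powerset, sepF N ωL ωR I *
        ((if t.image x ⊆ I then (ρR - ρL) ^ t.card else 0) * ρL ^ (n - t.card))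
        = (ρL ^ (n - t.card) * (ρR - ρL) ^ t.card) *
            (if t.image x ⊆ I then sepF N ωL ωR I else 0) := by
      intro I _
      by_cases h : t.image x ⊆ I <;> simp [h] <;> ring
    rw [Finset.sum_congr rfl h5, ← Finset.mul_sum,
      sep_IE N ωL ωR (t.image x) hK, sepQ_image ωL ωR x hmono t, mul_assoc]
  rw [Finset.sum_congr rfl step4]
  -- Step 5: group by cardinality
  rw [Finset.sum_powerset]
  rw [Finset.card_univ, Fintype.card_fin]
  refine Finset.sum_congr rfl fun j hj => ?_
  refine Finset.sum_congr rfl fun t ht => ?_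
  rw [(Finset.mem_powersetCard.mp ht).2]
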